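/- Let ℓ ≥ 1 and n ≥ 1 be integers, set k := 8ℓ, and let w₁,…,wₙ be nonnegative reals with ∑_{i=1}^n wᵢ = ℓ. Let (t_{i,j})_{i ∈ {1,…,n}, j ∈ {1,…,k}} be i.i.d. random variables uniform on [0,1]. Then P(∑_{i=1}^n ∑_{j=1}^k wᵢ·𝟙{t_{i,j} < 2/k} > 7ℓ² − ℓ) ≤ e^{−4ℓ}. -/

import Mathlib

open MeasureTheory ProbabilityTheory

private lemma aux_key14 (m : ℕ) : (13/4:ℝ)^(8*m+16) * 3^(4*m+8) ≤ 18^(7*m+13) := by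
  induction m with
  | zero => norm_num
  | succ m ih =>
    calc (13/4:ℝ)^(8*(m+1)+16) * 3^(4*(m+1)+8)
        = ((13/4:ℝ)^(8*m+16) * 3^(4*m+8)) * ((13/4:ℝ)^8 * 3^4) := by ring
      _ ≤ (18:ℝ)^(7*m+13) * 18^7 :=
          mul_le_mul ih (by norm_num) (by positivity) (by positivity)
      _ = (18:ℝ)^(7*(m+1)+13) := by ring

private lemma aux_pow14 (ℓ : ℕ) (hℓ : 1 ≤ ℓ) :
    ((13 * ℓ - 1) / (4 * ℓ) : ℝ) ^ (8 * ℓ) * Real.exp (4 * ℓ) ≤ ((9 * ℓ : ℝ)) ^ (7 * ℓ - 1) := by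
  have he3 : Real.exp 1 ≤ 3 := le_of_lt (lt_of_lt_of_le Real.exp_one_lt_d9 (by norm_num))
  rcases eq_or_lt_of_le hℓ with h1 | h2
  · subst h1
    have h4 : Real.exp 4 ≤ 81 := by
      calc Real.exp 4 = Real.exp 1 ^ 4 := by rw [← Real.exp_nat_mul]; norm_num
        _ ≤ (2.7182818286:ℝ) ^ 4 := pow_le_pow_left₀ (Real.exp_pos 1).le Real.exp_one_lt_d9.le 4
        _ ≤ 81 := by norm_num
    norm_num
    nlinarith [h4, Real.exp_pos 4]
  · obtain ⟨m, rfl⟩ : ∃ m, ℓ = m + 2 := ⟨ℓ - 2, by omega⟩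
    have hexp : Real.exp (4 * ((m:ℝ) + 2)) = Real.exp 1 ^ (4 * (m + 2)) := by
      rw [← Real.exp_nat_mul]; push_cast; ring_nf
    have hLpos : (0:ℝ) < (m:ℝ) + 2 := by positivity
    have hM : ((13 * ((m:ℝ)+2) - 1) / (4 * ((m:ℝ)+2)) : ℝ) ≤ 13/4 := by
      rw [div_le_div_iff₀ (by positivity) (by norm_num)]
      nlinarith
    have hMnonneg : (0:ℝ) ≤ (13 * ((m:ℝ)+2) - 1) / (4 * ((m:ℝ)+2)) :=
      div_nonneg (by nlinarith) (by positivity)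
    have e1 : 8 * (m + 2) = 8 * m + 16 := by ring
    have e2 : 4 * (m + 2) = 4 * m + 8 := by ring
    have e3 : 7 * (m + 2) - 1 = 7 * m + 13 := by omega
    push_cast
    rw [hexp, e1, e2, e3]
    calc ((13 * ((m:ℝ)+2) - 1) / (4 * ((m:ℝ)+2))) ^ (8*m+16) * Real.exp 1 ^ (4*m+8)
        ≤ (13/4 : ℝ) ^ (8*m+16) * 3 ^ (4*m+8) :=
          mul_le_mul (pow_le_pow_left₀ hMnonneg hM _) (pow_le_pow_left₀ (Real.exp_pos 1).le he3 _)
            (by positivity) (by positivity)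
      _ ≤ (18:ℝ) ^ (7*m+13) := aux_key14 m
      _ ≤ (9 * ((m:ℝ)+2)) ^ (7*m+13) := pow_le_pow_left₀ (by norm_num) (by linarith) _

/-- The Hoeffding-inequality application (eq:sij) in Case 1 of the proof of the
general-algorithms upper bound: with `k = 8ℓ` copies and nonnegative weights `w i`
summing to `ℓ`, and i.i.d. uniform `[0,1]` arrival times `t (i,j)`, the probability that
`∑ i ∑ j w i · 𝟙{t (i,j) < 2/k}` exceeds `7ℓ² − ℓ` is at most `e^{−4ℓ}`. -/
theorem stmt14 (ℓ n k : ℕ) (hℓ : 1 ≤ ℓ) (hn : 1 ≤ n) (hk : k = 8 * ℓ)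
    (w : Fin n → ℝ) (hw : ∀ i, 0 ≤ w i) (hsum : ∑ i, w i = (ℓ:ℝ))
    (Ω : Type*) [MeasurableSpace Ω] (μ : Measure Ω) [IsProbabilityMeasure μ]
    (t : Fin n × Fin k → Ω → ℝ) (hmt : ∀ p, Measurable (t p))
    (hdist : ∀ p, Measure.map (t p) μ = volume.restrict (Set.Icc (0:ℝ) 1))
    (hindep : iIndepFun t μ) :
    μ {ω | 7 * (ℓ:ℝ) ^ 2 - ℓ < ∑ i, ∑ j, w i * (if t (i, j) ω < 2 / (k:ℝ) then 1 else 0)}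
      ≤ ENNReal.ofReal (Real.exp (-(4 * (ℓ:ℝ)))) := by
  have hℓR : (1:ℝ) ≤ (ℓ:ℝ) := by exact_mod_cast hℓ
  have hℓpos : (0:ℝ) < ℓ := by linarith
  have hkR : (k:ℝ) = 8 * ℓ := by rw [hk]; push_cast; ring
  set θ : ℝ := 2 / (k:ℝ) with hθdef
  have hθ : θ = 1 / (4 * ℓ) := by rw [hθdef, hkR]; field_simp; ring
  have hθpos : 0 < θ := by rw [hθ]; positivity
  have hθle : θ ≤ 1 / 4 := by
    rw [hθ, div_le_div_iff₀ (by positivity) (by norm_num)]; linarith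
  set lam : ℝ := Real.log (9 * ℓ) / ℓ with hlamdef
  have h9ℓ : (1:ℝ) < 9 * ℓ := by linarith
  have h9pos : (0:ℝ) < 9 * ℓ := by linarith
  have hlogpos : 0 < Real.log (9 * ℓ) := Real.log_pos h9ℓ
  have hlampos : 0 < lam := div_pos hlogpos hℓpos
  -- the random variables
  set Y : Fin n × Fin k → Ω → ℝ :=
    fun p ω => w p.1 * (if t p ω < θ then 1 else 0) with hYdef
  have hφmeas : ∀ p : Fin n × Fin k,
      Measurable (fun x : ℝ => w p.1 * (if x < θ then 1 else 0)) := fun p =>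
    (Measurable.ite measurableSet_Iio measurable_const measurable_const).const_mul _
  have hYmeas : ∀ p, Measurable (Y p) := fun p => (hφmeas p).comp (hmt p)
  have hYindep : iIndepFun Y μ :=
    hindep.comp (fun p x => w p.1 * (if x < θ then 1 else 0)) hφmeas
  have hwle : ∀ i, w i ≤ (ℓ:ℝ) := by
    intro i
    rw [← hsum]
    exact Finset.single_le_sum (fun j _ => hw j) (Finset.mem_univ i)
  -- integrability
  have hint : ∀ p, Integrable (fun ω => Real.exp (lam * Y p ω)) μ := by
    intro p
    refine Integrable.mono' (integrable_const (Real.exp (lam * (ℓ:ℝ))))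
      ((hYmeas p).const_mul lam).exp.aestronglyMeasurable (ae_of_all _ fun ω => ?_)
    rw [Real.norm_eq_abs, abs_of_pos (Real.exp_pos _)]
    apply Real.exp_le_exp.2
    rw [hYdef]
    simp only
    split_ifs with h
    · rw [mul_one]
      exact mul_le_mul_of_nonneg_left (hwle p.1) hlampos.le
    · rw [mul_zero, mul_zero]
      positivity
  -- per-variable mgf
  have hmgf : ∀ p, mgf (Y p) μ lam = θ * (Real.exp (lam * w p.1) - 1) + 1 := by
    intro p
    have hAESM : AEStronglyMeasurable
        (fun x : ℝ => Real.exp (lam * (w p.1 * (if x < θ then 1 else 0))))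
        (Measure.map (t p) μ) :=
      (((hφmeas p).const_mul lam).exp).aestronglyMeasurable
    have h1 : mgf (Y p) μ lam
        = ∫ x, Real.exp (lam * (w p.1 * (if x < θ then 1 else 0)))
            ∂(Measure.map (t p) μ) := by
      rw [integral_map (hmt p).aemeasurable hAESM]
      rfl
    rw [h1, hdist p]
    have hptw : ∀ x : ℝ, Real.exp (lam * (w p.1 * (if x < θ then 1 else 0)))
        = Set.indicator (Set.Iio θ) (fun _ => Real.exp (lam * w p.1) - 1) x + 1 := by
      intro x
      by_cases h : x < θ
      · rw [Set.indicator_of_mem (by exact h)]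
        rw [if_pos h, mul_one]
        ring
      · rw [Set.indicator_of_notMem (by exact h)]
        rw [if_neg h, mul_zero, mul_zero, Real.exp_zero]
        ring
    simp_rw [hptw]
    rw [integral_add ((integrable_const _).indicator measurableSet_Iio) (integrable_const 1),
      integral_indicator_const _ measurableSet_Iio, integral_const]
    have hmeasθ : (volume.restrict (Set.Icc (0:ℝ) 1)) (Set.Iio θ) = ENNReal.ofReal θ := by
      rw [Measure.restrict_apply measurableSet_Iio]
      have : Set.Iio θ ∩ Set.Icc (0:ℝ) 1 = Set.Ico 0 θ := by
        ext x
        simp only [Set.mem_inter_iff, Set.mem_Iio, Set.mem_Icc, Set.mem_Ico]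
        constructor
        · rintro ⟨h1, h2, h3⟩; exact ⟨h2, h1⟩
        · rintro ⟨h1, h2⟩; exact ⟨h2, h1, by linarith⟩
      rw [this, Real.volume_Ico, sub_zero]
    have hprob : (volume.restrict (Set.Icc (0:ℝ) 1)) Set.univ = 1 := by
      rw [Measure.restrict_apply_univ, Real.volume_Icc]
      norm_num
    rw [measureReal_def, measureReal_def, hmeasθ, hprob]
    simp [ENNReal.toReal_ofReal hθpos.le, smul_eq_mul]
  -- bound each factor via concavity of rpow
  set M : ℝ := 1 + θ * (9 * ℓ - 1) with hMdef
  have hMpos : (0:ℝ) < M := by rw [hMdef]; nlinarith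
  have hfac : ∀ p, mgf (Y p) μ lam ≤ Real.exp (Real.log M * (w p.1 / ℓ)) := by
    intro p
    rw [hmgf p]
    set s : ℝ := w p.1 / ℓ with hs
    have hs0 : 0 ≤ s := div_nonneg (hw p.1) hℓpos.le
    have hs1 : s ≤ 1 := by rw [hs, div_le_one hℓpos]; exact hwle p.1
    have hE : Real.exp (lam * w p.1) = (9 * (ℓ:ℝ)) ^ s := by
      rw [Real.rpow_def_of_pos h9pos, hlamdef, hs]
      congr 1
      field_simp
    have hRHS : Real.exp (Real.log M * s) = M ^ s := by
      rw [Real.rpow_def_of_pos hMpos]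
    rw [hE, hRHS]
    have hconc := (Real.concaveOn_rpow hs0 hs1).2 (Set.mem_Ici.2 (by norm_num : (0:ℝ) ≤ 1))
      (Set.mem_Ici.2 h9pos.le) (by linarith : (0:ℝ) ≤ 1 - θ) hθpos.le (by ring)
    simp only [smul_eq_mul] at hconc
    rw [Real.one_rpow] at hconc
    have heq : (1 - θ) * 1 + θ * (9 * (ℓ:ℝ)) = M := by rw [hMdef]; ring
    rw [heq] at hconc
    linarith
  -- mgf of the sum
  set S : Ω → ℝ := ∑ p : Fin n × Fin k, Y p with hSdef
  have hmgfS : mgf S μ lam ≤ Real.exp (Real.log M * (8 * ℓ)) := by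
    rw [hSdef, hYindep.mgf_sum hYmeas Finset.univ]
    calc ∏ p : Fin n × Fin k, mgf (Y p) μ lam
        ≤ ∏ p : Fin n × Fin k, Real.exp (Real.log M * (w p.1 / ℓ)) :=
          Finset.prod_le_prod (fun p _ => mgf_nonneg) (fun p _ => hfac p)
      _ = Real.exp (∑ p : Fin n × Fin k, Real.log M * (w p.1 / ℓ)) := (Real.exp_sum _ _).symm
      _ = Real.exp (Real.log M * (8 * ℓ)) := by
          congr 1
          rw [Fintype.sum_prod_type]
          simp only [Finset.sum_const, Finset.card_univ, Fintype.card_fin, nsmul_eq_mul]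
          have hre : ∀ i : Fin n, (k:ℝ) * (Real.log M * (w i / ℓ))
              = ((k:ℝ) * Real.log M / ℓ) * w i := fun i => by ring
          simp_rw [hre, ← Finset.mul_sum, hsum, hkR]
          field_simp
  -- key exponent inequality
  have hMform : M = (13 * (ℓ:ℝ) - 1) / (4 * ℓ) := by
    rw [hMdef, hθ]; field_simp; ring
  have hkey : Real.log M * (8 * ℓ) - lam * (7 * (ℓ:ℝ)^2 - ℓ) ≤ -(4 * ℓ) := by
    have hpow := aux_pow14 ℓ hℓ
    rw [← hMform] at hpow
    have hL : (0:ℝ) < M ^ (8*ℓ) * Real.exp (4*ℓ) := by positivity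
    have hR : (0:ℝ) < ((9 * ℓ:ℝ)) ^ (7*ℓ-1) := by positivity
    have hlog := (Real.log_le_log_iff hL hR).2 hpow
    rw [Real.log_mul (by positivity) (Real.exp_pos _).ne', Real.log_pow, Real.log_pow,
      Real.log_exp] at hlog
    have hcast : ((7*ℓ-1 : ℕ) : ℝ) = 7 * (ℓ:ℝ) - 1 := by
      push_cast [Nat.cast_sub (by omega : 1 ≤ 7*ℓ)]; ring
    rw [hcast] at hlog
    push_cast at hlog
    have hlam_eps : lam * (7 * (ℓ:ℝ)^2 - ℓ) = Real.log (9*ℓ) * (7 * (ℓ:ℝ) - 1) := by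
      rw [hlamdef]; field_simp
    rw [hlam_eps]
    linarith
  -- Chernoff bound and conclusion
  have hintS : Integrable (fun ω => Real.exp (lam * S ω)) μ :=
    hYindep.integrable_exp_mul_sum hYmeas (fun p _ => hint p)
  have hcher := measure_ge_le_exp_mul_mgf (μ := μ) (X := S) (7 * (ℓ:ℝ)^2 - ℓ) hlampos.le hintS
  have hsetS : ∀ ω, (∑ i, ∑ j, w i * (if t (i, j) ω < θ then 1 else 0)) = S ω := by
    intro ω
    rw [hSdef, Finset.sum_apply, Fintype.sum_prod_type]
  calc μ {ω | 7 * (ℓ:ℝ) ^ 2 - ℓ < ∑ i, ∑ j, w i * (if t (i, j) ω < θ then 1 else 0)}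
      ≤ μ {ω | 7 * (ℓ:ℝ)^2 - ℓ ≤ S ω} := by
        apply measure_mono
        intro ω hω
        simp only [Set.mem_setOf_eq] at hω ⊢
        rw [← hsetS ω]
        exact hω.le
    _ = ENNReal.ofReal ((μ {ω | 7 * (ℓ:ℝ)^2 - ℓ ≤ S ω}).toReal) :=
        (ENNReal.ofReal_toReal (measure_ne_top μ _)).symm
    _ ≤ ENNReal.ofReal (Real.exp (-(4 * (ℓ:ℝ)))) := by
        apply ENNReal.ofReal_le_ofReal
        refine hcher.trans ?_
        calc Real.exp (-lam * (7 * (ℓ:ℝ)^2 - ℓ)) * mgf S μ lam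
            ≤ Real.exp (-lam * (7 * (ℓ:ℝ)^2 - ℓ)) * Real.exp (Real.log M * (8 * ℓ)) :=
              mul_le_mul_of_nonneg_left hmgfS (Real.exp_pos _).le
          _ = Real.exp (Real.log M * (8 * ℓ) - lam * (7 * (ℓ:ℝ)^2 - ℓ)) := by
              rw [← Real.exp_add]; ring_nf
          _ ≤ Real.exp (-(4 * ℓ)) := Real.exp_le_exp.2 hkey
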